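/- For any α ∈ (0,1), λ ∈ (0,1), and all x > 0, the pointwise inequality α(1-α)/(x(1-α+αx)) ≤ c·λ·(1-λ)·x^(-λ-1) holds with constant c = (α/λ)·(λ(1-α)/((1-λ)α))^λ. -/

import Mathlib

open Real

/-- For `α, λ ∈ (0,1)` and all `x > 0`, the pointwise inequality
`α(1-α)/(x(1-α+αx)) ≤ c·λ·(1-λ)·x^(-λ-1)` holds with
`c = (α/λ)·(λ(1-α)/((1-λ)α))^λ`. -/
theorem stmt_1 (α l : ℝ) (hα : α ∈ Set.Ioo (0:ℝ) 1) (hl : l ∈ Set.Ioo (0:ℝ) 1)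
    (c : ℝ) (hc : c = (α / l) * (l * (1 - α) / ((1 - l) * α)) ^ l) :
    ∀ x : ℝ, 0 < x →
      α * (1 - α) / (x * (1 - α + α * x)) ≤ c * l * (1 - l) * x ^ (-l - 1) := by
  obtain ⟨hα0, hα1⟩ := hα
  obtain ⟨hl0, hl1⟩ := hl
  intro x hx
  have h1α : (0:ℝ) < 1 - α := by linarith
  have h1l : (0:ℝ) < 1 - l := by linarith
  set y : ℝ := l * (1 - α) / ((1 - l) * α) with hy
  have hy0 : 0 < y := by positivity
  -- key inequality: x^l ≤ y^l * (l * (x/y) + (1 - l))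
  have key : x ^ l ≤ y ^ l * (l * (x / y) + (1 - l)) := by
    have ht : 0 < x / y := by positivity
    have hbern : (x / y) ^ l ≤ 1 + l * (x / y - 1) := by
      have := rpow_one_add_le_one_add_mul_self (s := x / y - 1) (by linarith) hl0.le hl1.le
      simpa using this
    have hx' : x ^ l = y ^ l * (x / y) ^ l := by
      rw [← Real.mul_rpow hy0.le ht.le, mul_div_cancel₀ x (ne_of_gt hy0)]
    rw [hx']
    have : (1:ℝ) + l * (x / y - 1) = l * (x / y) + (1 - l) := by ring
    nlinarith [rpow_pos_of_pos hy0 l]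
  -- reduce to: (1-α) * x^l ≤ (1-l) * y^l * (1-α+αx)
  have hred : (1 - α) * x ^ l ≤ (1 - l) * y ^ l * (1 - α + α * x) := by
    have hly : (1 - α) * (l / y) = (1 - l) * α := by
      field_simp [hy]
      rw [hy]; field_simp
    calc (1 - α) * x ^ l ≤ (1 - α) * (y ^ l * (l * (x / y) + (1 - l))) := by
          apply mul_le_mul_of_nonneg_left key h1α.le
      _ = y ^ l * ((1 - α) * (l / y) * x + (1 - α) * (1 - l)) := by ring
      _ = (1 - l) * y ^ l * (1 - α + α * x) := by rw [hly]; ring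
  -- now convert the original inequality
  have hden : 0 < x * (1 - α + α * x) := by positivity
  have hxl : 0 < x ^ l := rpow_pos_of_pos hx l
  have hxneg : x ^ (-l - 1) = 1 / (x * x ^ l) := by
    rw [show -l - 1 = -(l + 1) by ring, rpow_neg hx.le, rpow_add hx, rpow_one]
    field_simp
  have hcll : c * l * (1 - l) = α * (1 - l) * y ^ l := by
    rw [hc]; field_simp
  rw [hxneg, hcll, mul_one_div, div_le_div_iff₀ hden (by positivity)]
  have : α * (1 - α) * (x * x ^ l) = x * (α * ((1 - α) * x ^ l)) := by ring
  nlinarith [mul_le_mul_of_nonneg_left hred hα0.le]
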